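/- Let M be a p×q pattern matrix and N a q×s pattern matrix. If each column of M has exactly one entry equal to * and all other entries equal to 0, then P(M)P(N) = P(MN). -/

import Mathlib

inductive PSym | zero | star | any
deriving DecidableEq

namespace PSym

def symAdd : PSym → PSym → PSym
  | zero, x => x
  | x, zero => x
  | _, _ => any

def symMul : PSym → PSym → PSym
  | zero, _ => zero
  | _, zero => zero
  | star, star => star
  | _, _ => any

instance : Zero PSym := ⟨zero⟩
instance : Add PSym := ⟨symAdd⟩

instance : AddCommMonoid PSym where
  add_assoc a b c := by cases a <;> cases b <;> cases c <;> rfl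
  zero_add a := by cases a <;> rfl
  add_zero a := by cases a <;> rfl
  add_comm a b := by cases a <;> cases b <;> rfl
  nsmul := nsmulRec

end PSym

/-- The pattern class of a pattern matrix. -/
def PatClass {p q : Type*} (M : Matrix p q PSym) : Set (Matrix p q ℝ) :=
  {A | ∀ i j, (M i j = PSym.zero → A i j = 0) ∧ (M i j = PSym.star → A i j ≠ 0)}

/-- Product of pattern matrices. -/
def patMul {p q s : ℕ} (M : Matrix (Fin p) (Fin q) PSym) (N : Matrix (Fin q) (Fin s) PSym) :
    Matrix (Fin p) (Fin s) PSym :=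
  fun i j => ∑ k, PSym.symMul (M i k) (N k j)

/-- A 1×q pattern vector `M` is independent of an r×q pattern matrix `N`. -/
def Independent {q r : ℕ} (M : Matrix (Fin 1) (Fin q) PSym) (N : Matrix (Fin r) (Fin q) PSym) : Prop :=
  ∀ M₀ ∈ PatClass M, ∀ N₀ ∈ PatClass N, ∀ (z₁ : ℝ) (z₂ : Fin r → ℝ),
    (∀ j, z₁ * M₀ 0 j + ∑ i, z₂ i * N₀ i j = 0) → z₁ = 0


lemma symAdd_eq_zero (a b : PSym) : PSym.symAdd a b = PSym.zero ↔ a = PSym.zero ∧ b = PSym.zero := by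
  cases a <;> cases b <;> simp [PSym.symAdd]

lemma symAdd_eq_star (a b : PSym) : PSym.symAdd a b = PSym.star ↔
    (a = PSym.star ∧ b = PSym.zero) ∨ (a = PSym.zero ∧ b = PSym.star) := by
  cases a <;> cases b <;> simp [PSym.symAdd]

lemma psum_eq_zero {ι : Type*} (t : Finset ι) (f : ι → PSym) :
    (∑ k ∈ t, f k) = PSym.zero ↔ ∀ k ∈ t, f k = PSym.zero := by
  classical
  induction t using Finset.induction_on with
  | empty => exact iff_of_true (by rw [Finset.sum_empty]; rfl) (by simp)
  | @insert a t ha ih =>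
    rw [Finset.sum_insert ha]
    show PSym.symAdd _ _ = _ ↔ _
    rw [symAdd_eq_zero, ih]
    constructor
    · rintro ⟨h1, h2⟩ k hk
      rcases Finset.mem_insert.1 hk with rfl | hk
      · exact h1
      · exact h2 k hk
    · intro h
      exact ⟨h a (Finset.mem_insert_self _ _), fun k hk => h k (Finset.mem_insert_of_mem hk)⟩

lemma psum_eq_star {ι : Type*} (t : Finset ι) (f : ι → PSym)
    (h : (∑ k ∈ t, f k) = PSym.star) :
    ∃ k₀ ∈ t, f k₀ = PSym.star ∧ ∀ k ∈ t, k ≠ k₀ → f k = PSym.zero := by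
  classical
  induction t using Finset.induction_on with
  | empty => rw [Finset.sum_empty] at h; exact absurd h (by decide)
  | @insert a t ha ih =>
    rw [Finset.sum_insert ha] at h
    rcases (symAdd_eq_star _ _).1 h with ⟨h1, h2⟩ | ⟨h1, h2⟩
    · refine ⟨a, Finset.mem_insert_self _ _, h1, fun k hk hne => ?_⟩
      rcases Finset.mem_insert.1 hk with rfl | hk
      · exact absurd rfl hne
      · exact (psum_eq_zero t f).1 h2 k hk
    · obtain ⟨k₀, hk₀, hstar, hrest⟩ := ih h2
      refine ⟨k₀, Finset.mem_insert_of_mem hk₀, hstar, fun k hk hne => ?_⟩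
      rcases Finset.mem_insert.1 hk with rfl | hk
      · exact h1
      · exact hrest k hk hne

lemma realize {ι : Type*} [DecidableEq ι] (t : Finset ι) (f : ι → PSym) (x : ℝ)
    (h0 : (∑ k ∈ t, f k) = PSym.zero → x = 0)
    (hs : (∑ k ∈ t, f k) = PSym.star → x ≠ 0) :
    ∃ g : ι → ℝ, (∀ k ∈ t, (f k = PSym.zero → g k = 0) ∧ (f k = PSym.star → g k ≠ 0)) ∧
      (∑ k ∈ t, g k) = x := by
  classical
  induction t using Finset.induction_on generalizing x with
  | empty =>
    refine ⟨fun _ => 0, by simp, ?_⟩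
    simp [h0 (by rw [Finset.sum_empty]; rfl)]
  | @insert a t ha ih =>
    rw [Finset.sum_insert ha] at h0 hs
    have key : ∃ (x' v : ℝ), x' + v = x ∧
        ((∑ k ∈ t, f k) = PSym.zero → x' = 0) ∧ ((∑ k ∈ t, f k) = PSym.star → x' ≠ 0) ∧
        (f a = PSym.zero → v = 0) ∧ (f a = PSym.star → v ≠ 0) := by
      cases hfa : f a with
      | zero =>
        refine ⟨x, 0, by ring, ?_, ?_, ?_, ?_⟩
        · intro hS; exact h0 (by rw [hfa, hS]; rfl)
        · intro hS; exact hs (by rw [hfa, hS]; rfl)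
        · intro _; rfl
        · intro h; exact absurd h (by decide)
      | star =>
        cases hS : (∑ k ∈ t, f k) with
        | zero =>
          refine ⟨0, x, by ring, ?_, ?_, ?_, ?_⟩
          · intro _; rfl
          · intro h; exact absurd h (by decide)
          · intro h; exact absurd h (by decide)
          · intro _; exact hs (by rw [hfa, hS]; rfl)
        | star =>
          refine ⟨if x = 1 then 2 else 1, x - (if x = 1 then 2 else 1), by ring, ?_, ?_, ?_, ?_⟩
          · intro h; exact absurd h (by decide)
          · intro _; split <;> norm_num
          · intro h; exact absurd h (by decide)
          · intro _
            split
            · rename_i hx; rw [hx]; norm_num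
            · rename_i hx; intro hc; apply hx; linarith
        | any =>
          refine ⟨x - 1, 1, by ring, ?_, ?_, ?_, ?_⟩
          · intro h; exact absurd h (by decide)
          · intro h; exact absurd h (by decide)
          · intro h; exact absurd h (by decide)
          · intro _; exact one_ne_zero
      | any =>
        refine ⟨if (∑ k ∈ t, f k) = PSym.zero then 0 else 1,
          x - (if (∑ k ∈ t, f k) = PSym.zero then 0 else 1), by ring, ?_, ?_, ?_, ?_⟩
        · intro hS; simp [hS]
        · intro hS; rw [if_neg (by rw [hS]; decide)]; exact one_ne_zero
        · intro h; exact absurd h (by decide)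
        · intro h; exact absurd h (by decide)
    obtain ⟨x', v, hxv, hx0, hxs, hv0, hvs⟩ := key
    obtain ⟨g, hg, hgsum⟩ := ih x' hx0 hxs
    refine ⟨Function.update g a v, ?_, ?_⟩
    · intro k hk
      rcases Finset.mem_insert.1 hk with rfl | hk
      · rw [Function.update_self]; exact ⟨hv0, hvs⟩
      · rw [Function.update_of_ne (ne_of_mem_of_not_mem hk ha)]
        exact hg k hk
    · rw [Finset.sum_insert ha, Function.update_self]
      have : (∑ k ∈ t, Function.update g a v k) = ∑ k ∈ t, g k :=
        Finset.sum_congr rfl fun k hk =>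
          Function.update_of_ne (ne_of_mem_of_not_mem hk ha) v g
      rw [this, hgsum]; linarith

lemma symMul_eq_zero (a b : PSym) :
    PSym.symMul a b = PSym.zero ↔ a = PSym.zero ∨ b = PSym.zero := by
  cases a <;> cases b <;> simp [PSym.symMul]

lemma symMul_eq_star (a b : PSym) :
    PSym.symMul a b = PSym.star ↔ a = PSym.star ∧ b = PSym.star := by
  cases a <;> cases b <;> simp [PSym.symMul]

/-- If each column of `M` has exactly one `*` entry and all other
entries `0`, then `P(M)P(N) = P(MN)`. -/
theorem pattern_class_mul_of_cols {p q s : ℕ}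
    (M : Matrix (Fin p) (Fin q) PSym) (N : Matrix (Fin q) (Fin s) PSym)
    (hM : ∀ k : Fin q, (∃! i : Fin p, M i k = PSym.star) ∧
      ∀ i : Fin p, M i k ≠ PSym.star → M i k = PSym.zero) :
    {X : Matrix (Fin p) (Fin s) ℝ | ∃ A ∈ PatClass M, ∃ B ∈ PatClass N, X = A * B} =
      PatClass (patMul M N) := by
  classical
  choose r hrstar hruniq using fun k => (hM k).1
  have hM' : ∀ i k, M i k = if i = r k then PSym.star else PSym.zero := by
    intro i k
    split
    · rename_i h; rw [h]; exact hrstar k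
    · rename_i h; exact (hM k).2 i fun hst => h (hruniq k i hst)
  have hpat : ∀ i j, patMul M N i j =
      ∑ k ∈ Finset.univ.filter (fun k => r k = i), N k j := by
    intro i j
    rw [Finset.sum_filter]
    unfold patMul
    refine Finset.sum_congr rfl fun k _ => ?_
    by_cases h : r k = i
    · rw [if_pos h, hM', if_pos h.symm]
      cases N k j <;> rfl
    · rw [hM', if_neg fun hh => h hh.symm, if_neg h]
      cases N k j <;> rfl
  ext X
  simp only [Set.mem_setOf_eq]
  constructor
  · rintro ⟨A, hA, B, hB, rfl⟩
    intro i j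
    constructor
    · intro hz
      have hall := (psum_eq_zero Finset.univ fun k => PSym.symMul (M i k) (N k j)).1 hz
      rw [Matrix.mul_apply]
      refine Finset.sum_eq_zero fun k _ => ?_
      rcases (symMul_eq_zero _ _).1 (hall k (Finset.mem_univ k)) with h | h
      · rw [(hA i k).1 h, zero_mul]
      · rw [(hB k j).1 h, mul_zero]
    · intro hst
      obtain ⟨k₀, _, hk₀star, hrest⟩ :=
        psum_eq_star Finset.univ (fun k => PSym.symMul (M i k) (N k j)) hst
      obtain ⟨hMs, hNs⟩ := (symMul_eq_star _ _).1 hk₀star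
      rw [Matrix.mul_apply]
      rw [Finset.sum_eq_single k₀]
      · exact mul_ne_zero ((hA i k₀).2 hMs) ((hB k₀ j).2 hNs)
      · intro k _ hne
        rcases (symMul_eq_zero _ _).1 (hrest k (Finset.mem_univ k) hne) with h | h
        · rw [(hA i k).1 h, zero_mul]
        · rw [(hB k j).1 h, mul_zero]
      · intro h; exact absurd (Finset.mem_univ k₀) h
  · intro hX
    have hex : ∀ i j, ∃ g : Fin q → ℝ,
        (∀ k ∈ Finset.univ.filter (fun k => r k = i),
          (N k j = PSym.zero → g k = 0) ∧ (N k j = PSym.star → g k ≠ 0)) ∧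
        (∑ k ∈ Finset.univ.filter (fun k => r k = i), g k) = X i j := by
      intro i j
      refine realize _ _ _ (fun h => (hX i j).1 ?_) (fun h => (hX i j).2 ?_)
      · rw [hpat i j]; exact h
      · rw [hpat i j]; exact h
    choose g hg1 hg2 using hex
    refine ⟨(fun i k => if M i k = PSym.star then 1 else 0), ?_,
      (fun k j => g (r k) j k), ?_, ?_⟩
    · intro i k
      constructor
      · intro h
        show (if M i k = PSym.star then (1:ℝ) else 0) = 0
        rw [if_neg (by rw [h]; decide)]
      · intro h
        show (if M i k = PSym.star then (1:ℝ) else 0) ≠ 0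
        rw [if_pos h]; exact one_ne_zero
    · intro k j
      exact hg1 (r k) j k (by simp)
    · ext i j
      show X i j = ∑ k, (if M i k = PSym.star then (1:ℝ) else 0) * g (r k) j k
      have step : ∀ k : Fin q,
          (if M i k = PSym.star then (1:ℝ) else 0) * g (r k) j k =
            if r k = i then g (r k) j k else 0 := by
        intro k
        by_cases h : r k = i
        · have hms : M i k = PSym.star := by rw [hM', if_pos h.symm]
          rw [if_pos hms, one_mul, if_pos h]
        · have hms : M i k ≠ PSym.star := by
            rw [hM', if_neg fun hh => h hh.symm]; decide
          rw [if_neg hms, zero_mul, if_neg h]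
      rw [Finset.sum_congr rfl fun k _ => step k, ← Finset.sum_filter]
      rw [Finset.sum_congr rfl fun k hk => by
        rw [(Finset.mem_filter.1 hk).2]]
      exact (hg2 i j).symm
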